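/- With Λ(t) the polarization-loss semigroup, ρ₁ = |H⟩⟨H|, ρ₂ = ½(|H⟩+|V⟩)(⟨H|+⟨V|), and pᵢ(t) = tr Λ(t)[ρᵢ], one has ‖p₁(t)Λ_D(t)[ρ₁] − p₂(t)Λ_D(t)[ρ₂]‖₁/(p₁(t)+p₂(t)) = √(1 − 8e^{−2γ_H t}/(3e^{−γ_H t} + e^{−γ_V t})²), where Λ_D(t)[ρᵢ] = Λ(t)[ρᵢ]/pᵢ(t). -/

import Mathlib

open Matrix
open scoped ComplexOrder

/-- The trace norm `‖A‖₁ = tr √(AᴴA)` of a complex square matrix. -/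
noncomputable def traceNorm {n : Type*} [Fintype n] [DecidableEq n]
    (A : Matrix n n ℂ) : ℝ :=
  (((Matrix.posSemidef_conjTranspose_mul_self A).1.eigenvectorUnitary.1 *
      diagonal (((↑) : ℝ → ℂ) ∘ Real.sqrt ∘ (Matrix.posSemidef_conjTranspose_mul_self A).1.eigenvalues) *
      (star (Matrix.posSemidef_conjTranspose_mul_self A).1.eigenvectorUnitary : Matrix n n ℂ)).trace).re

/-- The polarization-loss dynamics: entries damped by
`e^{-γ_H t}, e^{-(γ_H+γ_V)t/2}, e^{-γ_V t}`. -/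
noncomputable def lossMap (γH γV t : ℝ) (ρ : Matrix (Fin 2) (Fin 2) ℂ) :
    Matrix (Fin 2) (Fin 2) ℂ :=
  !![(Real.exp (-(γH * t)) : ℂ) * ρ 0 0,
     (Real.exp (-((γH + γV) * t / 2)) : ℂ) * ρ 0 1;
     (Real.exp (-((γH + γV) * t / 2)) : ℂ) * ρ 1 0,
     (Real.exp (-(γV * t)) : ℂ) * ρ 1 1]

lemma psd_real_smul {n : Type*} [Fintype n] {A : Matrix n n ℂ} (hA : A.PosSemidef)
    {c : ℝ} (hc : 0 ≤ c) : ((c : ℂ) • A).PosSemidef := by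
  refine .of_dotProduct_mulVec_nonneg ?_ fun x => ?_
  · show ((c:ℂ) • A).conjTranspose = _
    rw [conjTranspose_smul, hA.1.eq]
    congr 1
    simp [Complex.ext_iff]
  · rw [smul_mulVec, dotProduct_smul, smul_eq_mul]
    exact mul_nonneg (by exact_mod_cast hc) (hA.dotProduct_mulVec_nonneg x)

lemma traceNorm_special (a b c : ℝ) (ha : 0 < a) (hb : 0 < b) (hc : c ^ 2 = a * b) :
    traceNorm !![((a:ℂ)/2), -((c:ℂ)/2); -((c:ℂ)/2), -((b:ℂ)/2)]
      = Real.sqrt (a ^ 2 + 6 * a * b + b ^ 2) / 2 := by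
  have hcC : (c:ℂ) ^ 2 = (a:ℂ) * b := by exact_mod_cast hc
  set M : Matrix (Fin 2) (Fin 2) ℂ := !![((a:ℂ)/2), -((c:ℂ)/2); -((c:ℂ)/2), -((b:ℂ)/2)] with hM
  set s : ℝ := Real.sqrt (a ^ 2 + 6 * a * b + b ^ 2) / 2 with hsdef
  have hnn : (0:ℝ) < a ^ 2 + 6 * a * b + b ^ 2 := by positivity
  have hs_pos : 0 < s := by
    have := Real.sqrt_pos.mpr hnn
    positivity
  have hs2 : s ^ 2 = (a ^ 2 + 6 * a * b + b ^ 2) / 4 := by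
    rw [hsdef, div_pow, Real.sq_sqrt hnn.le]; norm_num
  have hsC : (s:ℂ) ^ 2 = ((a:ℂ) ^ 2 + 6 * a * b + b ^ 2) / 4 := by exact_mod_cast hs2
  set B : Matrix (Fin 2) (Fin 2) ℂ :=
    ((s⁻¹ : ℝ) : ℂ) • (Mᴴ * M + ((a * b / 2 : ℝ) : ℂ) • 1) with hB
  have hBpsd : B.PosSemidef := by
    refine psd_real_smul ?_ (by positivity)
    exact (Matrix.posSemidef_conjTranspose_mul_self M).add
      (psd_real_smul Matrix.PosSemidef.one (by positivity))
  have hsinv : ((s⁻¹:ℝ):ℂ) ^ 2 * ((s:ℂ))^2 = 1 := by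
    push_cast
    field_simp
  have key : (Mᴴ * M + ((a * b / 2 : ℝ) : ℂ) • 1) ^ 2 = (((s:ℝ) ^ 2 : ℝ) : ℂ) • (Mᴴ * M) := by
    have hsimp : ∀ i j, (Mᴴ * M) i j = M 0 i * M 0 j + M 1 i * M 1 j := by
      intro i j
      rw [Matrix.mul_apply, Fin.sum_univ_two, Matrix.conjTranspose_apply,
        Matrix.conjTranspose_apply]
      have : ∀ u v : Fin 2, star (M u v) = M u v := by
        intro u v
        fin_cases u <;> fin_cases v <;>
          simp [hM, Complex.star_def, map_div₀, Complex.conj_ofReal]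
      rw [this, this]
    ext i j
    rw [pow_two, Matrix.mul_apply, Fin.sum_univ_two]
    simp only [Matrix.add_apply, Matrix.smul_apply, Matrix.one_apply, hsimp]
    fin_cases i <;> fin_cases j <;>
      simp only [hM, Matrix.cons_val', Matrix.cons_val_zero, Matrix.cons_val_one,
        Matrix.head_cons, Matrix.head_fin_const, Matrix.empty_val',
        Matrix.cons_val_fin_one, smul_eq_mul, Fin.isValue] <;>
      norm_num <;>
      push_cast
    · linear_combination (((c:ℂ)^2 + 2*(a:ℂ)^2 - 3*(a:ℂ)*(b:ℂ))/16) * hcC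
        - (((a:ℂ)^2+(c:ℂ)^2)/4) * hsC
    · linear_combination ((c:ℂ)*((b:ℂ)-(a:ℂ))/8) * hcC - ((c:ℂ)*((b:ℂ)-(a:ℂ))/4) * hsC
    · linear_combination ((c:ℂ)*((b:ℂ)-(a:ℂ))/8) * hcC - ((c:ℂ)*((b:ℂ)-(a:ℂ))/4) * hsC
    · linear_combination (((c:ℂ)^2 + 2*(b:ℂ)^2 - 3*(a:ℂ)*(b:ℂ))/16) * hcC
        - (((b:ℂ)^2+(c:ℂ)^2)/4) * hsC
  have hBsq : B ^ 2 = Mᴴ * M := by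
    rw [hB, smul_pow, key, smul_smul]
    push_cast
    rw [show ((s:ℂ)⁻¹) ^ 2 * (s:ℂ) ^ 2 = 1 by
      field_simp]
    simp
  have hsqrt : ((Matrix.posSemidef_conjTranspose_mul_self M).1.eigenvectorUnitary.1 *
      diagonal (((↑) : ℝ → ℂ) ∘ Real.sqrt ∘ (Matrix.posSemidef_conjTranspose_mul_self M).1.eigenvalues) *
      (star (Matrix.posSemidef_conjTranspose_mul_self M).1.eigenvectorUnitary : Matrix (Fin 2) (Fin 2) ℂ)) = B := by
    open scoped MatrixOrder in
    have e := (Matrix.posSemidef_conjTranspose_mul_self M).1.cfc_eq Real.sqrt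
    rw [Matrix.IsHermitian.cfc, Unitary.conjStarAlgAut_apply] at e
    refine e.symm.trans ?_
    open scoped MatrixOrder in
    rw [← cfcₙ_eq_cfc, ← CFC.sqrt_eq_real_sqrt _ (Matrix.posSemidef_conjTranspose_mul_self M).nonneg, ← hBsq,
      CFC.sqrt_sq B hBpsd.nonneg]
  have htr : B.trace = ((s:ℝ):ℂ) := by
    have hsne : (s:ℂ) ≠ 0 := by exact_mod_cast hs_pos.ne'
    have hsimp : ∀ i j, (Mᴴ * M) i j = M 0 i * M 0 j + M 1 i * M 1 j := by
      intro i j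
      rw [Matrix.mul_apply, Fin.sum_univ_two, Matrix.conjTranspose_apply,
        Matrix.conjTranspose_apply]
      have : ∀ u v : Fin 2, star (M u v) = M u v := by
        intro u v
        fin_cases u <;> fin_cases v <;>
          simp [hM, Complex.star_def, map_div₀, Complex.conj_ofReal]
      rw [this, this]
    rw [hB, Matrix.trace_fin_two]
    simp only [Matrix.smul_apply, Matrix.add_apply, Matrix.one_apply_eq, hsimp]
    have h00 : M 0 0 = (a:ℂ)/2 := by simp [hM]
    have h01 : M 0 1 = -((c:ℂ)/2) := by simp [hM]
    have h10 : M 1 0 = -((c:ℂ)/2) := by simp [hM]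
    have h11 : M 1 1 = -((b:ℂ)/2) := by simp [hM]
    rw [h00, h01, h10, h11]
    push_cast
    simp only [smul_eq_mul]
    rw [← mul_add, inv_mul_eq_iff_eq_mul₀ hsne]
    linear_combination ((1:ℂ)/2) * hcC - hsC
  unfold traceNorm
  rw [hsqrt, htr]
  simp


/-- For `ρ₁ = |H⟩⟨H|`, `ρ₂ = ½(|H⟩+|V⟩)(⟨H|+⟨V|)`, with `pᵢ(t) = tr Λ(t)[ρᵢ]` and
`Λ_D(t)[ρᵢ] = Λ(t)[ρᵢ]/pᵢ(t)`, one has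
`‖p₁(t)Λ_D(t)[ρ₁] − p₂(t)Λ_D(t)[ρ₂]‖₁/(p₁(t)+p₂(t))
  = √(1 − 8e^{−2γ_H t}/(3e^{−γ_H t} + e^{−γ_V t})²)`. -/
theorem stmt3 (γH γV : ℝ) (hH : 0 ≤ γH) (hV : 0 ≤ γV) (t : ℝ) (ht : 0 ≤ t)
    (ρ₁ ρ₂ : Matrix (Fin 2) (Fin 2) ℂ)
    (hρ₁ : ρ₁ = !![1, 0; 0, 0])
    (hρ₂ : ρ₂ = (1/2 : ℂ) • !![1, 1; 1, 1])
    (p₁ p₂ : ℂ) (hp₁ : p₁ = (lossMap γH γV t ρ₁).trace)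
    (hp₂ : p₂ = (lossMap γH γV t ρ₂).trace)
    (ΛD₁ ΛD₂ : Matrix (Fin 2) (Fin 2) ℂ)
    (hΛD₁ : ΛD₁ = p₁⁻¹ • lossMap γH γV t ρ₁)
    (hΛD₂ : ΛD₂ = p₂⁻¹ • lossMap γH γV t ρ₂) :
    traceNorm (p₁ • ΛD₁ - p₂ • ΛD₂) / (p₁.re + p₂.re)
      = Real.sqrt (1 - 8 * Real.exp (-(2 * γH * t)) /
          (3 * Real.exp (-(γH * t)) + Real.exp (-(γV * t))) ^ 2) := by
  set a : ℝ := Real.exp (-(γH * t)) with hadef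
  set b : ℝ := Real.exp (-(γV * t)) with hbdef
  set c : ℝ := Real.exp (-((γH + γV) * t / 2)) with hcdef
  have ha : 0 < a := Real.exp_pos _
  have hb : 0 < b := Real.exp_pos _
  have hc : c ^ 2 = a * b := by
    rw [hadef, hbdef, hcdef, pow_two, ← Real.exp_add, ← Real.exp_add]
    congr 1
    ring
  have hp1v : p₁ = (a : ℂ) := by
    rw [hp₁, hρ₁, Matrix.trace_fin_two]
    simp [lossMap, hadef, Complex.ofReal_exp]
  have hp2v : p₂ = ((a : ℂ) + b) / 2 := by
    rw [hp₂, hρ₂, Matrix.trace_fin_two]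
    simp [lossMap, hadef, hbdef, Complex.ofReal_exp]
    ring
  have hp1ne : p₁ ≠ 0 := by
    rw [hp1v]
    exact_mod_cast ha.ne'
  have hp2ne : p₂ ≠ 0 := by
    rw [hp2v]
    have : (0:ℝ) < (a + b) / 2 := by positivity
    exact_mod_cast this.ne'
  have hdiff : p₁ • ΛD₁ - p₂ • ΛD₂
      = !![((a:ℂ)/2), -((c:ℂ)/2); -((c:ℂ)/2), -((b:ℂ)/2)] := by
    rw [hΛD₁, hΛD₂, smul_smul, mul_inv_cancel₀ hp1ne, one_smul,
      smul_smul, mul_inv_cancel₀ hp2ne, one_smul]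
    ext i j
    fin_cases i <;> fin_cases j <;>
      · simp [lossMap, hρ₁, hρ₂, hadef, hbdef, hcdef, Complex.ofReal_exp]
        push_cast
        ring
  have hre1 : p₁.re = a := by rw [hp1v]; simp
  have hre2 : p₂.re = (a + b) / 2 := by
    rw [hp2v]
    push_cast
    simp
  rw [hdiff, traceNorm_special a b c ha hb hc, hre1, hre2]
  have he : Real.exp (-(2 * γH * t)) = a ^ 2 := by
    rw [hadef, pow_two, ← Real.exp_add]
    congr 1
    ring
  have hd : (0:ℝ) < 3 * a + b := by positivity
  have hrw : 1 - 8 * Real.exp (-(2 * γH * t)) / (3 * a + b) ^ 2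
      = (a ^ 2 + 6 * a * b + b ^ 2) / (3 * a + b) ^ 2 := by
    rw [he]
    field_simp
    ring
  rw [hrw, Real.sqrt_div (by positivity), Real.sqrt_sq hd.le, div_div]
  congr 1
  ring
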